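/- (Equilibrium growth rates of the stochastic Ricker equation.) Let k > 0, θ > 0, r > 0. Let X be a real random variable distributed as Gamma(k, θ), and let ε be a square-integrable real random variable independent of X with E[ε] = 1 and Var(ε) = v. Set Y = X · e^{r(1 − X)} · ε. If E[Y] = E[X] = kθ and Var(Y) = Var(X) = kθ², then 2·e^{r/(k + 1)} − ((1 + v)·e^{2r})^{1/(k + 2)} = 1. -/

import Mathlib

open MeasureTheory ProbabilityTheory Real

lemma gamma_ae_nonneg (a l : ℝ) : ∀ᵐ x ∂(gammaMeasure a l), 0 ≤ x := by
  rw [ae_iff]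
  have h : {x : ℝ | ¬ 0 ≤ x} = Set.Iio 0 := by ext x; simp [not_le]
  rw [h, gammaMeasure, withDensity_apply _ measurableSet_Iio]
  exact lintegral_gammaPDF_of_nonpos le_rfl

lemma gamma_tilt {a l s p : ℝ} (ha : 0 < a) (hl : 0 < l) (hs : 0 ≤ s) (hp : 1 ≤ p) :
    ∫ x, x ^ p * Real.exp (-(s * x)) ∂(gammaMeasure a l)
      = Real.Gamma (a + p) / Real.Gamma a * (l ^ a / (l + s) ^ (a + p)) := by
  have hls : 0 < l + s := by linarith
  have hap : 0 < a + p := by linarith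
  have hΓa := Real.Gamma_pos_of_pos ha
  have hΓap := Real.Gamma_pos_of_pos hap
  set c : ℝ := Real.Gamma (a + p) / Real.Gamma a * (l ^ a / (l + s) ^ (a + p)) with hc
  have hcpos : 0 < c := by
    apply mul_pos (div_pos hΓap hΓa)
    exact div_pos (rpow_pos_of_pos hl _) (rpow_pos_of_pos hls _)
  have hmf : Measurable fun x : ℝ => ENNReal.ofReal (x ^ p * Real.exp (-(s * x))) := by
    apply Measurable.ennreal_ofReal
    fun_prop
  have key : ∀ x : ℝ, gammaPDF a l x * ENNReal.ofReal (x ^ p * Real.exp (-(s * x)))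
      = ENNReal.ofReal c * gammaPDF (a + p) (l + s) x := by
    intro x
    rcases lt_or_ge x 0 with hx | hx
    · rw [gammaPDF_of_neg hx, gammaPDF_of_neg hx, zero_mul, mul_zero]
    · rw [gammaPDF_of_nonneg hx, gammaPDF_of_nonneg hx,
        ← ENNReal.ofReal_mul (by positivity), ← ENNReal.ofReal_mul hcpos.le]
      congr 1
      rcases eq_or_lt_of_le hx with hx0 | hx0
      · rw [← hx0]
        rw [Real.zero_rpow (by linarith : p ≠ 0), Real.zero_rpow (by nlinarith : a + p - 1 ≠ 0)]
        ring
      · rw [show a + p - 1 = (a - 1) + p by ring, Real.rpow_add hx0,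
          show -((l + s) * x) = -(l * x) + -(s * x) by ring, Real.exp_add, hc]
        field_simp
  have L : ∫⁻ x, ENNReal.ofReal (x ^ p * Real.exp (-(s * x))) ∂(gammaMeasure a l)
      = ENNReal.ofReal c := by
    have hgm : Measurable (gammaPDF a l) := (measurable_gammaPDFReal a l).ennreal_ofReal
    have hgm2 : Measurable (gammaPDF (a + p) (l + s)) :=
      (measurable_gammaPDFReal (a + p) (l + s)).ennreal_ofReal
    rw [gammaMeasure, lintegral_withDensity_eq_lintegral_mul _ hgm hmf]
    simp only [Pi.mul_apply]
    calc ∫⁻ x, gammaPDF a l x * ENNReal.ofReal (x ^ p * Real.exp (-(s * x)))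
        = ∫⁻ x, ENNReal.ofReal c * gammaPDF (a + p) (l + s) x := lintegral_congr key
      _ = ENNReal.ofReal c := by
          rw [lintegral_const_mul _ hgm2, lintegral_gammaPDF_eq_one hap hls, mul_one]
  have hnn : 0 ≤ᵐ[gammaMeasure a l] fun x => x ^ p * Real.exp (-(s * x)) := by
    filter_upwards [gamma_ae_nonneg a l] with x hx
    positivity
  have hsm : AEStronglyMeasurable (fun x : ℝ => x ^ p * Real.exp (-(s * x)))
      (gammaMeasure a l) := by
    apply Measurable.aestronglyMeasurable; fun_prop
  rw [integral_eq_lintegral_of_nonneg_ae hnn hsm, L, ENNReal.toReal_ofReal hcpos.le]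

lemma tilt_val {k θ s p : ℝ} (hk : 0 < k) (hθ : 0 < θ) (hs : 0 ≤ s) (hp : 1 ≤ p) :
    ∫ x, x ^ p * Real.exp (-(s * x)) ∂(gammaMeasure k θ⁻¹)
      = Real.Gamma (k + p) / Real.Gamma k * (θ ^ p / (1 + s * θ) ^ (k + p)) := by
  rw [gamma_tilt hk (inv_pos.mpr hθ) hs hp]
  congr 1
  have hA : (0:ℝ) < 1 + s * θ := by positivity
  have h1 : θ⁻¹ + s = (1 + s * θ) * θ⁻¹ := by field_simp
  rw [h1, Real.mul_rpow hA.le (inv_nonneg.mpr hθ.le), Real.inv_rpow hθ.le, Real.inv_rpow hθ.le,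
    Real.rpow_add hθ]
  have h2 : θ ^ k ≠ 0 := (rpow_pos_of_pos hθ _).ne'
  have h3 : θ ^ p ≠ 0 := (rpow_pos_of_pos hθ _).ne'
  have h4 : (1 + s * θ) ^ (k + p) ≠ 0 := (rpow_pos_of_pos hA _).ne'
  field_simp

/-- Equilibrium growth rates of the stochastic Ricker equation:
Let `k, θ, r > 0`, `X ~ Gamma(k, θ)` (rate `1/θ`), `ε` square-integrable, independent of `X`,
with `E[ε] = 1` and `Var(ε) = v`, and set `Y = X · e^{r(1 − X)} · ε`. If `E[Y] = E[X] = kθ`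
and `Var(Y) = Var(X) = kθ²`, then `2·e^{r/(k + 1)} − ((1 + v)·e^{2r})^{1/(k + 2)} = 1`. -/
theorem stmt14 {Ω : Type*} {mΩ : MeasurableSpace Ω} (μ : Measure Ω) [IsProbabilityMeasure μ]
    (k θ r v : ℝ) (hk : 0 < k) (hθ : 0 < θ) (hr : 0 < r)
    (X ε : Ω → ℝ) (hXm : Measurable X)
    (hX : Measure.map X μ = gammaMeasure k θ⁻¹)
    (hε : MemLp ε 2 μ) (hindep : IndepFun ε X μ)
    (hεmean : ∫ ω, ε ω ∂μ = 1) (hεvar : variance ε μ = v)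
    (Y : Ω → ℝ) (hY : Y = fun ω => X ω * Real.exp (r * (1 - X ω)) * ε ω)
    (hmean₁ : ∫ ω, Y ω ∂μ = ∫ ω, X ω ∂μ) (hmean₂ : ∫ ω, X ω ∂μ = k * θ)
    (hvar₁ : variance Y μ = variance X μ) (hvar₂ : variance X μ = k * θ ^ 2) :
    2 * Real.exp (r / (k + 1)) - ((1 + v) * Real.exp (2 * r)) ^ (1 / (k + 2)) = 1 := by
  subst hY
  have hΓk : 0 < Real.Gamma k := Real.Gamma_pos_of_pos hk
  have hA : (0:ℝ) < 1 + r * θ := by positivity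
  have hB : (0:ℝ) < 1 + 2 * r * θ := by positivity
  set g : ℝ → ℝ := fun x => x * Real.exp (r * (1 - x)) with hg
  have hgm : Measurable g := by fun_prop
  have hGm : Measurable (fun x => (g x) ^ 2) := by fun_prop
  -- a.e. nonnegativity of X
  have haeX : ∀ᵐ ω ∂μ, 0 ≤ X ω := by
    have hset : {ω | ¬ 0 ≤ X ω} = X ⁻¹' Set.Iio 0 := by ext ω; simp [not_le]
    rw [ae_iff, hset, ← Measure.map_apply hXm measurableSet_Iio, hX, gammaMeasure,
      withDensity_apply _ measurableSet_Iio]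
    exact lintegral_gammaPDF_of_nonpos le_rfl
  -- change of variables for integrals of functions of X
  have hmap : ∀ (f : ℝ → ℝ), Measurable f →
      ∫ ω, f (X ω) ∂μ = ∫ x, f x ∂(gammaMeasure k θ⁻¹) := by
    intro f hf
    rw [← hX, integral_map hXm.aemeasurable hf.aestronglyMeasurable]
  -- value of ∫ g dGamma
  have hval1 : ∫ x, g x ∂(gammaMeasure k θ⁻¹)
      = Real.exp r * (k * (θ / (1 + r * θ) ^ (k + 1))) := by
    have hpt : ∀ x : ℝ, g x = Real.exp r * (x ^ (1:ℝ) * Real.exp (-(r * x))) := by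
      intro x
      rw [Real.rpow_one, hg]
      calc x * Real.exp (r * (1 - x)) = x * Real.exp (r + -(r * x)) := by ring_nf
        _ = Real.exp r * (x * Real.exp (-(r * x))) := by rw [Real.exp_add]; ring
    simp_rw [hpt]
    rw [integral_const_mul, tilt_val hk hθ hr.le le_rfl, Real.Gamma_add_one hk.ne',
      Real.rpow_one]
    rw [mul_div_assoc, div_self hΓk.ne', mul_one]
  -- value of ∫ g² dGamma
  have hval2 : ∫ x, (g x) ^ 2 ∂(gammaMeasure k θ⁻¹)
      = Real.exp (2 * r) * (k * (k + 1) * (θ ^ 2 / (1 + 2 * r * θ) ^ (k + 2))) := by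
    have hpt : ∀ x : ℝ, (g x) ^ 2
        = Real.exp (2 * r) * (x ^ (2:ℝ) * Real.exp (-(2 * r * x))) := by
      intro x
      rw [Real.rpow_two, hg]
      calc (x * Real.exp (r * (1 - x))) ^ 2
          = x ^ 2 * (Real.exp (r * (1 - x)) * Real.exp (r * (1 - x))) := by ring
        _ = x ^ 2 * Real.exp (2 * r + -(2 * r * x)) := by
            rw [← Real.exp_add]; congr 1; ring
        _ = Real.exp (2 * r) * (x ^ 2 * Real.exp (-(2 * r * x))) := by
            rw [Real.exp_add]; ring
    simp_rw [hpt]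
    rw [integral_const_mul, tilt_val hk hθ (by positivity) (by norm_num),
      show k + 2 = (k + 1) + 1 by ring, Real.Gamma_add_one (by positivity),
      show k + 1 = k + 1 by rfl]
    rw [show (k + 1 : ℝ) = k + 1 by rfl]
    have : Real.Gamma (k + 1) = k * Real.Gamma k := Real.Gamma_add_one hk.ne'
    rw [this]
    have h2 : θ ^ (2:ℝ) = θ ^ 2 := Real.rpow_two θ
    rw [h2]
    field_simp
  -- independence facts
  have hind1 : IndepFun (fun ω => g (X ω)) ε μ := by
    have := (hindep.comp measurable_id hgm).symm
    exact this
  have hind2 : IndepFun (fun ω => (g (X ω)) ^ 2) (fun ω => (ε ω) ^ 2) μ := by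
    have := (hindep.comp (measurable_id.pow_const 2) hGm).symm
    exact this
  -- first moment equation
  have hEY : ∫ ω, X ω * Real.exp (r * (1 - X ω)) * ε ω ∂μ
      = (∫ ω, g (X ω) ∂μ) * ∫ ω, ε ω ∂μ :=
    hind1.integral_fun_mul_eq_mul_integral (hgm.comp hXm).aestronglyMeasurable hε.aestronglyMeasurable
  have h1eq : Real.exp r * (k * (θ / (1 + r * θ) ^ (k + 1))) = k * θ := by
    have := hmean₁
    rw [hEY, hεmean, mul_one, hmap g hgm, hval1, hmean₂] at this
    exact this
  have hApow : (0:ℝ) < (1 + r * θ) ^ (k + 1) := rpow_pos_of_pos hA _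
  have h1 : Real.exp r = (1 + r * θ) ^ (k + 1) := by
    have hkθ : k * θ ≠ 0 := by positivity
    field_simp at h1eq
    apply mul_right_cancel₀ hkθ
    rw [mul_comm θ r] at h1eq
    linear_combination (k * θ) * h1eq
  -- Memℒp Y
  have hYsm : AEStronglyMeasurable (fun ω => X ω * Real.exp (r * (1 - X ω)) * ε ω) μ :=
    ((hgm.comp hXm).aestronglyMeasurable.mul hε.aestronglyMeasurable)
  have hbound : ∀ᵐ ω ∂μ, ‖X ω * Real.exp (r * (1 - X ω)) * ε ω‖
      ≤ ‖(Real.exp r / r) * ε ω‖ := by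
    filter_upwards [haeX] with ω hω
    simp only [norm_mul, Real.norm_eq_abs]
    apply mul_le_mul_of_nonneg_right _ (abs_nonneg _)
    rw [abs_of_nonneg hω, abs_of_nonneg (Real.exp_pos _).le,
      abs_of_nonneg (by positivity : (0:ℝ) ≤ Real.exp r / r)]
    set x := X ω
    have ht : r * x ≤ Real.exp (r * x) := by
      have := Real.add_one_le_exp (r * x); linarith
    have hinv : Real.exp (r * (1 - x)) = Real.exp r / Real.exp (r * x) := by
      rw [← Real.exp_sub]; congr 1; ring
    rw [hinv, mul_div_assoc', div_le_div_iff₀ (Real.exp_pos _) hr]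
    nlinarith [mul_le_mul_of_nonneg_right ht (Real.exp_pos r).le]
  have hYL2 : MemLp (fun ω => X ω * Real.exp (r * (1 - X ω)) * ε ω) 2 μ :=
    (hε.const_mul (Real.exp r / r)).of_le hYsm hbound
  -- second moments
  have hEe2 : ∫ ω, (ε ω) ^ 2 ∂μ = v + 1 := by
    have hv := variance_eq_sub hε
    simp only [Pi.pow_apply] at hv
    rw [hεvar, hεmean] at hv
    linarith
  have hEY2 : ∫ ω, (X ω * Real.exp (r * (1 - X ω)) * ε ω) ^ 2 ∂μ
      = (∫ ω, (g (X ω)) ^ 2 ∂μ) * ∫ ω, (ε ω) ^ 2 ∂μ := by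
    have h := hind2.integral_fun_mul_eq_mul_integral (hGm.comp hXm).aestronglyMeasurable
      (hε.aestronglyMeasurable.pow 2)
    rw [← h]
    refine integral_congr_ae (Filter.Eventually.of_forall fun ω => ?_)
    simp only [hg, mul_pow]
  have hG_int : ∫ ω, (g (X ω)) ^ 2 ∂μ
      = Real.exp (2 * r) * (k * (k + 1) * (θ ^ 2 / (1 + 2 * r * θ) ^ (k + 2))) := by
    have h := integral_map (μ := μ) (f := fun x => (g x) ^ 2) hXm.aemeasurable hGm.aestronglyMeasurable
    rw [hX] at h
    exact h.symm.trans hval2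
  have hvarY := variance_eq_sub hYL2
  simp only [Pi.pow_apply] at hvarY
  have hYint : ∫ ω, X ω * Real.exp (r * (1 - X ω)) * ε ω ∂μ = k * θ := by
    rw [hmean₁, hmean₂]
  have hsum : ∫ ω, (X ω * Real.exp (r * (1 - X ω)) * ε ω) ^ 2 ∂μ
      = k * θ ^ 2 + (k * θ) ^ 2 := by
    rw [hvar₁, hvar₂] at hvarY
    rw [hYint] at hvarY
    linarith
  have hBpow : (0:ℝ) < (1 + 2 * r * θ) ^ (k + 2) := rpow_pos_of_pos hB _
  have h2eq : Real.exp (2 * r) * (k * (k + 1) * (θ ^ 2 / (1 + 2 * r * θ) ^ (k + 2))) * (v + 1)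
      = k * θ ^ 2 + (k * θ) ^ 2 := by
    rw [← hsum, hEY2, hG_int, hEe2]
  have h2 : (1 + v) * Real.exp (2 * r) = (1 + 2 * r * θ) ^ (k + 2) := by
    have hD : (k : ℝ) * (k + 1) * θ ^ 2 ≠ 0 := by positivity
    field_simp at h2eq
    apply mul_right_cancel₀ hD
    linear_combination (k * θ ^ 2) * h2eq
  have e1 : Real.exp (r / (k + 1)) = 1 + r * θ := by
    have hk1 : (0:ℝ) < k + 1 := by linarith
    have hlog : r = (k + 1) * Real.log (1 + r * θ) := by
      have h := congrArg Real.log h1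
      rwa [Real.log_exp, Real.log_rpow hA] at h
    have hdiv : r / (k + 1) = Real.log (1 + r * θ) := by
      rw [div_eq_iff hk1.ne']; linear_combination hlog
    rw [hdiv, Real.exp_log hA]
  have e2 : ((1 + v) * Real.exp (2 * r)) ^ (1 / (k + 2)) = 1 + 2 * r * θ := by
    have hk2 : (k:ℝ) + 2 ≠ 0 := by positivity
    rw [h2, ← Real.rpow_mul hB.le, mul_one_div, div_self hk2, Real.rpow_one]
  rw [e1, e2]
  ring
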